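/- For all nonnegative integers n and all parameters alpha, beta, the sum over k from 0 to n of (alpha+beta+2k+1)(alpha+beta+1)_k / Gamma(alpha+beta+n+k+2) times P_k^{(alpha,beta)}(x) P_{n-k}^{(-n-alpha-1, -n-beta-1)}(y) equals (1/Gamma(alpha+beta+1)) (1/n!) ((x-y)/2)^n. -/

import Mathlib

noncomputable def poch (a : ℝ) (k : ℕ) : ℝ := ∏ m ∈ Finset.range k, (a + m)

noncomputable def lag (α : ℝ) (n : ℕ) (x : ℝ) : ℝ :=
  ∑ k ∈ Finset.range (n + 1),
    (-1) ^ k * (poch (α + k + 1) (n - k) / (n - k).factorial) * x ^ k / k.factorial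

noncomputable def jacobi (α β : ℝ) (n : ℕ) (x : ℝ) : ℝ :=
  ∑ k ∈ Finset.range (n + 1),
    poch ((n : ℝ) + α + β + 1) k * poch (α + k + 1) (n - k) /
      (k.factorial * (n - k).factorial) * ((x - 1) / 2) ^ k

noncomputable def charlier (a : ℝ) (n : ℕ) (x : ℝ) : ℝ :=
  ∑ m ∈ Finset.range (n + 1),
    (∏ j ∈ Finset.range m, (x - (j : ℝ))) / m.factorial * (-a) ^ (n - m) / (n - m).factorial

open Finset

lemma poch_zero (a : ℝ) : poch a 0 = 1 := by simp [poch]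

lemma poch_succ (a : ℝ) (k : ℕ) : poch a (k+1) = poch a k * (a + k) := by
  simp [poch, Finset.prod_range_succ]

lemma poch_succ_left (a : ℝ) (k : ℕ) : poch a (k+1) = a * poch (a+1) k := by
  unfold poch
  rw [Finset.prod_range_succ']
  rw [show (∏ i ∈ range k, (a + ↑(i+1))) = ∏ i ∈ range k, ((a+1) + ↑i) by
    apply Finset.prod_congr rfl; intro i _; push_cast; ring]
  push_cast; ring

lemma poch_add (a : ℝ) (m l : ℕ) : poch a (m+l) = poch a m * poch (a + m) l := by
  unfold poch
  rw [Finset.prod_range_add]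
  congr 1
  apply Finset.prod_congr rfl; intro i _; push_cast; ring

lemma poch_reflect (a : ℝ) (j : ℕ) : poch a j = (-1)^j * poch (1 - a - j) j := by
  unfold poch
  rw [← Finset.prod_range_reflect (fun m => a + (m:ℝ)) j]
  rw [show ((-1:ℝ))^j = ∏ _m ∈ range j, (-1:ℝ) by simp]
  rw [← Finset.prod_mul_distrib]
  apply Finset.prod_congr rfl
  intro m hm
  rw [Finset.mem_range] at hm
  have : ((j - 1 - m : ℕ) : ℝ) = (j:ℝ) - 1 - m := by
    have h1 : m ≤ j - 1 := by omega
    have h2 : 1 ≤ j := by omega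
    push_cast [Nat.cast_sub h1, Nat.cast_sub h2]
    ring
  rw [this]; ring

lemma fact_ne (n : ℕ) : (n.factorial : ℝ) ≠ 0 := by
  exact_mod_cast n.factorial_ne_zero

lemma gamma_inv_step (y : ℝ) : (Real.Gamma y)⁻¹ = y * (Real.Gamma (y+1))⁻¹ := by
  by_cases hy : y = 0
  · simp [hy, Real.Gamma_zero]
  · rw [Real.Gamma_add_one hy, mul_inv, ← mul_assoc, mul_inv_cancel₀ hy, one_mul]

lemma gamma_inv_poch (x : ℝ) (k : ℕ) : (Real.Gamma x)⁻¹ = poch x k * (Real.Gamma (x + k))⁻¹ := by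
  induction k with
  | zero => simp [poch_zero]
  | succ k ih =>
    rw [ih, poch_succ, gamma_inv_step (x + k)]
    push_cast
    ring_nf

noncomputable def kt (σ : ℝ) (N M t : ℕ) : ℝ :=
  (-1:ℝ)^t * (σ+2*t+1) * poch (σ+1) t * poch (σ+N+2+t) (M-t) /
    (t.factorial * (N-t).factorial)

lemma key (σ : ℝ) (N M : ℕ) (hM : N ≤ M) :
    ∑ t ∈ range (N+1), kt σ N M t
    = if N = 0 then (σ+1) * poch (σ+2) M else 0 := by
  unfold kt
  rcases Nat.eq_zero_or_pos N with hN | hN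
  · subst hN
    simp only [if_pos]
    rw [Finset.sum_range_one]
    rw [show σ + (0:ℕ) + 2 + (0:ℕ) = σ + 2 by push_cast; ring]
    simp [poch_zero]
  · rw [if_neg (by omega)]
    set a : ℕ → ℝ := fun t =>
      (-1:ℝ)^t * (σ+2*t+1) * poch (σ+1) t * poch (σ+N+2+t) (M-t) /
        (t.factorial * (N-t).factorial) with ha
    set H : ℕ → ℝ := fun t =>
      (-1:ℝ)^(t+1) * (σ+t+N+1) * poch (σ+1) t * poch (σ+N+2+t) (M-t) * t /
        (N * t.factorial * (N-t).factorial) with hH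
    have step : ∀ t ∈ range N, a t = H (t+1) - H t := by
      intro t ht
      rw [Finset.mem_range] at ht
      have htM : t < M := lt_of_lt_of_le ht hM
      have h1 : M - t = (M - (t+1)) + 1 := by omega
      have h2 : N - t = (N - (t+1)) + 1 := by omega
      simp only [ha, hH]
      rw [h1, poch_succ_left]
      rw [show (σ + ↑N + 2 + ↑(t+1) : ℝ) = σ + ↑N + 2 + ↑t + 1 by push_cast; ring]
      rw [poch_succ (σ+1) t]
      rw [h2]
      rw [show (t+1).factorial = (t+1) * t.factorial from Nat.factorial_succ t]
      rw [show ((N - (t+1)) + 1).factorial = ((N-(t+1))+1) * (N-(t+1)).factorial from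
        Nat.factorial_succ _]
      have hc1 : ((N - (t+1) : ℕ) : ℝ) = (N:ℝ) - t - 1 := by
        have : t + 1 ≤ N := ht
        push_cast [Nat.cast_sub this]; ring
      push_cast [hc1]
      rw [pow_succ, pow_succ]
      have hNne : (N:ℝ) ≠ 0 := by positivity
      have htf : (t.factorial : ℝ) ≠ 0 := fact_ne t
      have hNf : ((N - (t+1)).factorial : ℝ) ≠ 0 := fact_ne _
      have hD : (N:ℝ) - ↑t ≠ 0 := by
        have : (t:ℝ) < N := by exact_mod_cast ht
        intro h; linarith
      have ht1 : (t:ℝ) + 1 ≠ 0 := by positivity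
      have hrw : (N:ℝ) - ↑t - 1 + 1 = (N:ℝ) - ↑t := by ring
      simp only [hrw]
      field_simp
      ring
    have tele : ∑ t ∈ range N, a t = H N - H 0 := by
      rw [Finset.sum_congr rfl step, Finset.sum_range_sub]
    have hH0 : H 0 = 0 := by simp [hH]
    have hlast : a N = - H N := by
      simp only [ha, hH]
      have : N - N = 0 := by omega
      rw [this]
      rw [pow_succ]
      have hNne : (N:ℝ) ≠ 0 := by positivity
      have hNf : ((0:ℕ).factorial : ℝ) = 1 := by norm_num
      field_simp
      ring
    rw [Finset.sum_range_succ, tele, hH0]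
    have h := hlast
    simp only [ha, hH] at h ⊢
    rw [h]
    ring

noncomputable def Dc (α β : ℝ) (n i j : ℕ) : ℝ :=
  poch (α+i+1) (n-i-j) * poch (α+β+1) (2*i) * (-1:ℝ)^((n-i-j)+j) /
    (i.factorial * j.factorial)

noncomputable def Ee (α β x y : ℝ) (n i j k : ℕ) : ℝ :=
  ((x-1)/2)^i * ((y-1)/2)^j * Dc α β n i j *
    kt (α+β+2*i) (n-i-j) ((n-i-j)+2*j) (k-i)

lemma core (α β x y : ℝ) (n k i j : ℕ) (hik : i ≤ k) (hkn : k ≤ n) (hjk : j + k ≤ n) :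
    (α+β+2*(k:ℝ)+1) * poch (α+β+1) k * poch (α+β+(n:ℝ)+(k:ℝ)+2) (n-k) *
      (poch ((k:ℝ)+α+β+1) i * poch (α+(i:ℝ)+1) (k-i) /
        ((i.factorial : ℝ) * ((k-i).factorial : ℝ)) * ((x-1)/2)^i) *
      (poch (((n-k : ℕ):ℝ) + (-(n:ℝ)-α-1) + (-(n:ℝ)-β-1) + 1) j *
        poch ((-(n:ℝ)-α-1)+(j:ℝ)+1) ((n-k)-j) /
        ((j.factorial : ℝ) * (((n-k)-j).factorial : ℝ)) * ((y-1)/2)^j)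
    = Ee α β x y n i j k := by
  obtain ⟨t, rfl⟩ : ∃ t, k = i + t := ⟨k - i, by omega⟩
  have e1 : (i+t) - i = t := by omega
  have e2 : (n-(i+t)) - j = (n-i-j) - t := by omega
  rw [e1, e2]
  unfold Ee Dc kt
  rw [e1]
  set N := n - i - j with hNdef
  have htN : t ≤ N := by omega
  have hNc : (N:ℝ) = (n:ℝ) - i - j := by
    rw [hNdef]
    push_cast [Nat.cast_sub (show j ≤ n - i by omega), Nat.cast_sub (show i ≤ n by omega)]
    ring
  have hnkc : ((n-(i+t) : ℕ):ℝ) = (n:ℝ) - i - t := by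
    push_cast [Nat.cast_sub (show i+t ≤ n by omega)]
    ring
  have hNtc : ((N - t : ℕ):ℝ) = (N:ℝ) - t := by
    push_cast [Nat.cast_sub htN]
    ring
  have hsgn : ((-1:ℝ))^(N-t) = (-1)^N * (-1)^t := by
    have hNt : ((-1:ℝ))^(N-t) * ((-1:ℝ))^t = (-1)^N := by
      rw [← pow_add, show N-t+t = N by omega]
    have ht2 : ((-1:ℝ))^t * ((-1:ℝ))^t = 1 := by
      rw [← pow_add]; exact Even.neg_one_pow ⟨t, rfl⟩
    calc ((-1:ℝ))^(N-t) = (-1)^(N-t) * ((-1)^t*(-1)^t) := by rw [ht2, mul_one]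
      _ = ((-1)^(N-t)*(-1)^t)*(-1)^t := by ring
      _ = (-1)^N*(-1)^t := by rw [hNt]
  have h2 : poch (α+β+1) (i+t) * poch ((↑(i+t):ℝ)+α+β+1) i
      = poch (α+β+1) (2*i) * poch (α+β+2*(i:ℝ)+1) t := by
    rw [show ((↑(i+t):ℝ)+α+β+1) = (α+β+1) + ((i+t : ℕ):ℝ) by push_cast; ring]
    rw [← poch_add]
    rw [show (i+t)+i = 2*i+t by omega]
    rw [poch_add]
    rw [show (α+β+1) + ((2*i : ℕ):ℝ) = α+β+2*(i:ℝ)+1 by push_cast; ring]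
  have h4 : poch ((↑(n-(i+t)):ℝ) + (-(n:ℝ)-α-1) + (-(n:ℝ)-β-1) + 1) j *
        poch (α+β+(n:ℝ)+(↑(i+t):ℝ)+2) (n-(i+t))
      = (-1:ℝ)^j * poch (α+β+2*(i:ℝ)+(N:ℝ)+2+(t:ℝ)) ((N+2*j)-t) := by
    rw [show ((↑(n-(i+t)):ℝ) + (-(n:ℝ)-α-1) + (-(n:ℝ)-β-1) + 1)
        = -(α+β+(n:ℝ)+(i:ℝ)+(t:ℝ)+1) by rw [hnkc]; ring]
    rw [poch_reflect (-(α+β+(n:ℝ)+(i:ℝ)+(t:ℝ)+1)) j]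
    rw [show (1 - (-(α+β+(n:ℝ)+(i:ℝ)+(t:ℝ)+1)) - (j:ℝ))
        = (α+β+(n:ℝ)+(i:ℝ)+(t:ℝ)+2-(j:ℝ)) by ring]
    rw [mul_assoc]
    rw [show (α+β+(n:ℝ)+(↑(i+t):ℝ)+2)
        = (α+β+(n:ℝ)+(i:ℝ)+(t:ℝ)+2-(j:ℝ)) + (j:ℝ) by push_cast; ring]
    rw [← poch_add]
    rw [show j + (n - (i+t)) = (N+2*j)-t by omega]
    rw [show (α+β+(n:ℝ)+(i:ℝ)+(t:ℝ)+2-(j:ℝ)) = α+β+2*(i:ℝ)+(N:ℝ)+2+(t:ℝ) by rw [hNc]; ring]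
  have h5 : poch (α+(i:ℝ)+1) t * poch ((-(n:ℝ)-α-1)+(j:ℝ)+1) (N-t)
      = (-1:ℝ)^N * (-1:ℝ)^t * poch (α+(i:ℝ)+1) N := by
    rw [poch_reflect ((-(n:ℝ)-α-1)+(j:ℝ)+1) (N-t)]
    rw [show (1 - ((-(n:ℝ)-α-1)+(j:ℝ)+1) - (↑(N-t):ℝ))
        = (α+(i:ℝ)+1) + (t:ℝ) by rw [hNtc, hNc]; ring]
    rw [hsgn]
    have hm : poch (α+(i:ℝ)+1) t * poch ((α+(i:ℝ)+1)+(t:ℝ)) (N-t) = poch (α+(i:ℝ)+1) N := by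
      rw [← poch_add, show t + (N-t) = N by omega]
    linear_combination ((-1:ℝ)^N*(-1:ℝ)^t) * hm
  calc (α+β+2*(↑(i+t):ℝ)+1) * poch (α+β+1) (i+t) * poch (α+β+(n:ℝ)+(↑(i+t):ℝ)+2) (n-(i+t)) *
      (poch ((↑(i+t):ℝ)+α+β+1) i * poch (α+(i:ℝ)+1) t /
        ((i.factorial : ℝ) * (t.factorial : ℝ)) * ((x-1)/2)^i) *
      (poch ((↑(n-(i+t)):ℝ) + (-(n:ℝ)-α-1) + (-(n:ℝ)-β-1) + 1) j *
        poch ((-(n:ℝ)-α-1)+(j:ℝ)+1) (N-t) /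
        ((j.factorial : ℝ) * ((N-t).factorial : ℝ)) * ((y-1)/2)^j)
      = (α+β+2*(↑(i+t):ℝ)+1) *
          (poch (α+β+1) (i+t) * poch ((↑(i+t):ℝ)+α+β+1) i) *
          (poch ((↑(n-(i+t)):ℝ) + (-(n:ℝ)-α-1) + (-(n:ℝ)-β-1) + 1) j *
            poch (α+β+(n:ℝ)+(↑(i+t):ℝ)+2) (n-(i+t))) *
          (poch (α+(i:ℝ)+1) t * poch ((-(n:ℝ)-α-1)+(j:ℝ)+1) (N-t)) *
          ((x-1)/2)^i * ((y-1)/2)^j /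
          ((i.factorial : ℝ) * (t.factorial : ℝ) * (j.factorial : ℝ) * ((N-t).factorial : ℝ)) := by
        ring
    _ = ((x - 1) / 2) ^ i * ((y - 1) / 2) ^ j *
        (poch (α + (i:ℝ) + 1) N * poch (α + β + 1) (2 * i) * (-1:ℝ) ^ (N + j) /
          ((i.factorial:ℝ) * (j.factorial:ℝ))) *
      ((-1:ℝ) ^ t * (α + β + 2 * (i:ℝ) + 2 * (t:ℝ) + 1) * poch (α + β + 2 * (i:ℝ) + 1) t *
          poch (α + β + 2 * (i:ℝ) + (N:ℝ) + 2 + (t:ℝ)) (N + 2 * j - t) /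
        ((t.factorial:ℝ) * ((N - t).factorial:ℝ))) := by
        rw [h2, h4, h5]
        push_cast
        ring

lemma extend_sum (h : ℕ → ℝ) (k n : ℕ) (hk : k ≤ n) :
    ∑ i ∈ range (k+1), h i = ∑ i ∈ range (n+1), (if i ≤ k then h i else 0) := by
  have hsub : range (k+1) ⊆ range (n+1) := by
    intro i hi; simp only [mem_range] at *; omega
  calc ∑ i ∈ range (k+1), h i
      = ∑ i ∈ range (k+1), (if i ≤ k then h i else 0) := by
        apply Finset.sum_congr rfl
        intro i hi
        rw [mem_range] at hi
        rw [if_pos (by omega)]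
    _ = ∑ i ∈ range (n+1), (if i ≤ k then h i else 0) := by
        apply Finset.sum_subset hsub
        intro i _ hi
        rw [mem_range] at hi
        rw [if_neg (by omega)]

lemma step1 (α β x y : ℝ) (n k : ℕ) (hk : k ≤ n) :
    (α+β+2*(k:ℝ)+1) * poch (α+β+1) k * poch (α+β+(n:ℝ)+(k:ℝ)+2) (n-k) *
      jacobi α β k x * jacobi (-(n:ℝ)-α-1) (-(n:ℝ)-β-1) (n-k) y
    = ∑ i ∈ range (n+1), ∑ j ∈ range (n+1),
        (if i ≤ k ∧ j + k ≤ n then Ee α β x y n i j k else 0) := by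
  unfold jacobi
  rw [extend_sum _ k n hk, extend_sum _ (n-k) n (by omega)]
  rw [mul_assoc, Finset.sum_mul_sum]
  simp only [Finset.mul_sum]
  apply Finset.sum_congr rfl
  intro i _
  apply Finset.sum_congr rfl
  intro j _
  by_cases h1 : i ≤ k
  · by_cases h2 : j ≤ n - k
    · rw [if_pos h1, if_pos h2, if_pos ⟨h1, by omega⟩]
      have := core α β x y n k i j h1 hk (by omega)
      rw [← this]; ring
    · rw [if_pos h1, if_neg h2, if_neg (by omega : ¬(i ≤ k ∧ j + k ≤ n))]
      ring
  · rw [if_neg h1, if_neg (by omega : ¬(i ≤ k ∧ j + k ≤ n))]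
    ring

lemma step2 (α β x y : ℝ) (n i j : ℕ) (hi : i ≤ n) (hj : j ≤ n) :
    ∑ k ∈ range (n+1), (if i ≤ k ∧ j + k ≤ n then Ee α β x y n i j k else 0)
    = if i + j = n then
        ((x-1)/2)^i * ((y-1)/2)^j * (-1:ℝ)^j * poch (α+β+1) (2*n+1) /
          (i.factorial * j.factorial)
      else 0 := by
  by_cases hij : i + j ≤ n
  · have hfilter : ∑ k ∈ range (n+1), (if i ≤ k ∧ j + k ≤ n then Ee α β x y n i j k else 0)
        = ∑ k ∈ Finset.Ico i (n-j+1), Ee α β x y n i j k := by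
      rw [← Finset.sum_filter]
      apply Finset.sum_congr _ (fun _ _ => rfl)
      ext k
      simp only [Finset.mem_filter, mem_range, Finset.mem_Ico]
      omega
    rw [hfilter, Finset.sum_Ico_eq_sum_range]
    have hlen : n - j + 1 - i = (n-i-j) + 1 := by omega
    rw [hlen]
    have hEe : ∀ t, Ee α β x y n i j (i+t)
        = ((x-1)/2)^i * ((y-1)/2)^j * Dc α β n i j *
            kt (α+β+2*i) (n-i-j) ((n-i-j)+2*j) t := by
      intro t
      unfold Ee
      congr 1
      congr 1
      omega
    simp only [hEe]
    rw [← Finset.mul_sum]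
    rw [key _ _ _ (by omega)]
    by_cases hn : i + j = n
    · rw [if_pos hn]
      have hN : n - i - j = 0 := by omega
      simp only [hN, Nat.zero_add, if_pos]
      unfold Dc
      simp only [hN, poch_zero, Nat.zero_add]
      have hmerge : (α+β+2*(i:ℝ)+1) * poch (α+β+2*(i:ℝ)+2) (2*j)
          = poch (α+β+2*(i:ℝ)+1) (2*j+1) := by
        rw [poch_succ_left]
        have harg : (α+β+2*(i:ℝ)+1)+1 = α+β+2*(i:ℝ)+2 := by ring
        rw [harg]
      have hmerge2 : poch (α+β+1) (2*i) * poch (α+β+2*(i:ℝ)+1) (2*j+1)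
          = poch (α+β+1) (2*n+1) := by
        rw [show (α+β+2*(i:ℝ)+1) = (α+β+1) + ((2*i : ℕ):ℝ) by push_cast; ring,
          ← poch_add, show 2*i+(2*j+1) = 2*n+1 by omega]
      rw [hmerge]
      linear_combination (((x-1)/2)^i * ((y-1)/2)^j * (-1:ℝ)^j /
        ((i.factorial : ℝ) * (j.factorial : ℝ))) * hmerge2
    · rw [if_neg hn, if_neg (by omega), mul_zero]
  · rw [if_neg (by omega)]
    apply Finset.sum_eq_zero
    intro k _
    rw [if_neg (by omega)]

lemma star (α β x y : ℝ) (n : ℕ) :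
    ∑ k ∈ range (n+1),
      (α+β+2*(k:ℝ)+1) * poch (α+β+1) k * poch (α+β+(n:ℝ)+(k:ℝ)+2) (n-k) *
        jacobi α β k x * jacobi (-(n:ℝ)-α-1) (-(n:ℝ)-β-1) (n-k) y
    = poch (α+β+1) (2*n+1) * (1/(n.factorial : ℝ)) * ((x-y)/2)^n := by
  rw [Finset.sum_congr rfl (fun k hk => step1 α β x y n k (by
    rw [mem_range] at hk; omega))]
  rw [Finset.sum_comm]
  have inner : ∀ i ∈ range (n+1),
      (∑ k ∈ range (n+1), ∑ j ∈ range (n+1),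
        (if i ≤ k ∧ j + k ≤ n then Ee α β x y n i j k else 0))
      = ∑ j ∈ range (n+1), (if i + j = n then
          ((x-1)/2)^i * ((y-1)/2)^j * (-1:ℝ)^j * poch (α+β+1) (2*n+1) /
            (i.factorial * j.factorial) else 0) := by
    intro i hi
    rw [mem_range] at hi
    rw [Finset.sum_comm]
    apply Finset.sum_congr rfl
    intro j hj
    rw [mem_range] at hj
    exact step2 α β x y n i j (by omega) (by omega)
  rw [Finset.sum_congr rfl inner]
  have inner2 : ∀ i ∈ range (n+1),
      (∑ j ∈ range (n+1), (if i + j = n then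
          ((x-1)/2)^i * ((y-1)/2)^j * (-1:ℝ)^j * poch (α+β+1) (2*n+1) /
            (i.factorial * j.factorial) else 0))
      = ((x-1)/2)^i * ((y-1)/2)^(n-i) * (-1:ℝ)^(n-i) * poch (α+β+1) (2*n+1) /
            (i.factorial * (n-i).factorial) := by
    intro i hi
    rw [mem_range] at hi
    rw [Finset.sum_congr rfl (fun j _ => show _ = ite (j = n-i) _ (0:ℝ) by
      by_cases hc : i + j = n
      · rw [if_pos hc, if_pos (by omega)]
      · rw [if_neg hc, if_neg (by omega)])]
    rw [Finset.sum_ite_eq' (range (n+1)) (n-i)]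
    rw [if_pos (by rw [mem_range]; omega)]
  rw [Finset.sum_congr rfl inner2]
  generalize hu : (x-1)/2 = u
  generalize hv : (y-1)/2 = v
  rw [show (x-y)/2 = u + (-v) by rw [← hu, ← hv]; ring]
  rw [add_pow]
  rw [Finset.mul_sum]
  apply Finset.sum_congr rfl
  intro i hi
  rw [mem_range] at hi
  have hch : ((n.choose i : ℕ) : ℝ) * i.factorial * (n-i).factorial = n.factorial := by
    exact_mod_cast congrArg (Nat.cast : ℕ → ℝ)
      (Nat.choose_mul_factorial_mul_factorial (by omega : i ≤ n))
  have hnv : (-v)^(n-i) = (-1:ℝ)^(n-i) * v^(n-i) := by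
    rw [neg_pow]
  rw [hnv]
  have h1 : (i.factorial : ℝ) ≠ 0 := fact_ne i
  have h2 : ((n-i).factorial : ℝ) ≠ 0 := fact_ne (n-i)
  have h3 : (n.factorial : ℝ) ≠ 0 := fact_ne n
  field_simp
  linear_combination (-1 : ℝ) * poch (α+β+1) (2*n+1) * u^i * v^(n-i) * hch

theorem stmt10 (α β x y : ℝ) (n : ℕ) :
    ∑ k ∈ Finset.range (n + 1),
      (α + β + 2 * k + 1) * poch (α + β + 1) k *
        (Real.Gamma (α + β + n + k + 2))⁻¹ * jacobi α β k x *
        jacobi (-(n : ℝ) - α - 1) (-(n : ℝ) - β - 1) (n - k) y =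
      (Real.Gamma (α + β + 1))⁻¹ * (1 / n.factorial) * ((x - y) / 2) ^ n := by
  have hstep : ∀ k ∈ range (n+1),
      (α + β + 2 * (k:ℝ) + 1) * poch (α + β + 1) k *
        (Real.Gamma (α + β + n + k + 2))⁻¹ * jacobi α β k x *
        jacobi (-(n : ℝ) - α - 1) (-(n : ℝ) - β - 1) (n - k) y
      = ((α+β+2*(k:ℝ)+1) * poch (α+β+1) k * poch (α+β+(n:ℝ)+(k:ℝ)+2) (n-k) *
          jacobi α β k x * jacobi (-(n:ℝ)-α-1) (-(n:ℝ)-β-1) (n-k) y) *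
          (Real.Gamma (α+β+2*(n:ℝ)+2))⁻¹ := by
    intro k hk
    rw [mem_range] at hk
    have h := gamma_inv_poch (α + β + (n:ℝ) + (k:ℝ) + 2) (n-k)
    rw [show (α + β + (n:ℝ) + (k:ℝ) + 2 + ((n-k : ℕ):ℝ)) = α+β+2*(n:ℝ)+2 by
      push_cast [Nat.cast_sub (show k ≤ n by omega)]; ring] at h
    rw [h]
    ring
  rw [Finset.sum_congr rfl hstep, ← Finset.sum_mul, star α β x y n]
  rw [gamma_inv_poch (α+β+1) (2*n+1)]
  rw [show (α+β+1 + ((2*n+1 : ℕ):ℝ)) = α+β+2*(n:ℝ)+2 by push_cast; ring]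
  ring
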